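/- In the structure R₂, ≤_i-successorship is closed under suprema for i ∈ {1,2}: if S is a nonempty set of ordinals and α ≤_i β for every β ∈ S, then α ≤_i sup S. -/

import Mathlib

open Ordinal

noncomputable section

/-- The least epsilon number: the least fixed point of `ξ ↦ ω ^ ξ`. -/
def eps0 : Ordinal := sInf {ξ : Ordinal | Ordinal.omega0 ^ ξ = ξ}

namespace R2

/-- Terms of the language `{≤, ≤₁, ≤₂}`: existentially quantified variables,
universally quantified variables, and parameters (ordinal constants). -/
inductive Trm : Type 1 where
  | evar : ℕ → Trm
  | avar : ℕ → Trm
  | cst  : Ordinal → Trm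

def Trm.val (v w : ℕ → Ordinal) : Trm → Ordinal
  | .evar n => v n
  | .avar n => w n
  | .cst c  => c

/-- Quantifier-free formulas in the language `{≤, ≤₁, ≤₂}`. -/
inductive QF : Type 1 where
  | le  : Trm → Trm → QF
  | le1 : Trm → Trm → QF
  | le2 : Trm → Trm → QF
  | not : QF → QF
  | and : QF → QF → QF
  | or  : QF → QF → QF

def QF.eval (r1 r2 : Ordinal → Ordinal → Prop) (v w : ℕ → Ordinal) : QF → Prop
  | .le s t  => s.val v w ≤ t.val v w
  | .le1 s t => r1 (s.val v w) (t.val v w)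
  | .le2 s t => r2 (s.val v w) (t.val v w)
  | .not φ   => ¬ φ.eval r1 r2 v w
  | .and φ ψ => φ.eval r1 r2 v w ∧ ψ.eval r1 r2 v w
  | .or φ ψ  => φ.eval r1 r2 v w ∨ ψ.eval r1 r2 v w

def Trm.NoAvar : Trm → Prop
  | .avar _ => False
  | _ => True

def QF.NoAvar : QF → Prop
  | .le s t  => s.NoAvar ∧ t.NoAvar
  | .le1 s t => s.NoAvar ∧ t.NoAvar
  | .le2 s t => s.NoAvar ∧ t.NoAvar
  | .not φ   => φ.NoAvar
  | .and φ ψ => φ.NoAvar ∧ ψ.NoAvar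
  | .or φ ψ  => φ.NoAvar ∧ ψ.NoAvar

def Trm.CstBelow (δ : Ordinal) : Trm → Prop
  | .cst c => c < δ
  | _ => True

def QF.CstBelow (δ : Ordinal) : QF → Prop
  | .le s t  => s.CstBelow δ ∧ t.CstBelow δ
  | .le1 s t => s.CstBelow δ ∧ t.CstBelow δ
  | .le2 s t => s.CstBelow δ ∧ t.CstBelow δ
  | .not φ   => φ.CstBelow δ
  | .and φ ψ => φ.CstBelow δ ∧ ψ.CstBelow δ
  | .or φ ψ  => φ.CstBelow δ ∧ ψ.CstBelow δ

/-- Satisfaction of a Σ₁-formula (an existential block in front of a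
quantifier-free formula without universal variables) in the segment of
ordinals `< δ`, with the indicated interpretations of `≤₁` and `≤₂`. -/
def Sat1 (r1 r2 : Ordinal → Ordinal → Prop) (δ : Ordinal) (φ : QF) : Prop :=
  ∃ v : ℕ → Ordinal, (∀ n, v n < δ) ∧ φ.eval r1 r2 v v

/-- Satisfaction of a Σ₂-formula (a block of existential quantifiers followed
by a block of universal quantifiers in front of a quantifier-free formula) in
the segment of ordinals `< δ`. -/
def Sat2 (r1 r2 : Ordinal → Ordinal → Prop) (δ : Ordinal) (φ : QF) : Prop :=
  ∃ v : ℕ → Ordinal, (∀ n, v n < δ) ∧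
    ∀ w : ℕ → Ordinal, (∀ n, w n < δ) → φ.eval r1 r2 v w

/-- `(α; ≤, ≤₁, ≤₂)` is a Σ₁-elementary substructure of `(β; ≤, ≤₁, ≤₂)`:
Σ₁-sentences with parameters `< α` hold in `α` iff they hold in `β`. -/
def Sig1Elem (r1 r2 : Ordinal → Ordinal → Prop) (α β : Ordinal) : Prop :=
  ∀ φ : QF, φ.NoAvar → φ.CstBelow α → (Sat1 r1 r2 α φ ↔ Sat1 r1 r2 β φ)

/-- `(α; ≤, ≤₁, ≤₂)` is a Σ₂-elementary substructure of `(β; ≤, ≤₁, ≤₂)`. -/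
def Sig2Elem (r1 r2 : Ordinal → Ordinal → Prop) (α β : Ordinal) : Prop :=
  ∀ φ : QF, φ.CstBelow α → (Sat2 r1 r2 α φ ↔ Sat2 r1 r2 β φ)

/-- The simultaneous recursive (in `β`) definition of `α ≤₁ β` (`i = false`)
and `α ≤₂ β` (`i = true`): `α ≤ᵢ β` iff `α ≤ β` and `(α; ≤, ≤₁, ≤₂)` is a
Σᵢ-elementary substructure of `(β; ≤, ≤₁, ≤₂)`, where the relations `≤₁, ≤₂`
are the restrictions to the segment below `β`, already defined by recursion. -/
noncomputable def leAux : Ordinal → Bool → Ordinal → Prop :=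
  WellFounded.fix Ordinal.lt_wf fun β IH i α =>
    α ≤ β ∧
      (match i with
        | false => Sig1Elem
        | true  => Sig2Elem)
        (fun x y => ∃ h : y < β, IH y h false x)
        (fun x y => ∃ h : y < β, IH y h true x) α β

/-- `α ≤₁ β` in the structure `R₂`. -/
def le1 (α β : Ordinal) : Prop := leAux β false α

/-- `α ≤₂ β` in the structure `R₂`. -/
def le2 (α β : Ordinal) : Prop := leAux β true α

def lt1 (α β : Ordinal) : Prop := le1 α β ∧ α < β

def lt2 (α β : Ordinal) : Prop := le2 α β ∧ α < β

/-- `h` is an isomorphism (w.r.t. `≤, ≤₁, ≤₂`) on the set `A`. -/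
def IsoOn (h : Ordinal → Ordinal) (A : Set Ordinal) : Prop :=
  ∀ x ∈ A, ∀ y ∈ A,
    (x ≤ y ↔ h x ≤ h y) ∧ (le1 x y ↔ le1 (h x) (h y)) ∧ (le2 x y ↔ le2 (h x) (h y))

end R2

namespace R2

/-- The restriction of `le1` below `β`. -/
def Rel1 (β : Ordinal) : Ordinal → Ordinal → Prop := fun x y => ∃ _ : y < β, le1 x y

/-- The restriction of `le2` below `β`. -/
def Rel2 (β : Ordinal) : Ordinal → Ordinal → Prop := fun x y => ∃ _ : y < β, le2 x y

theorem leAux_eq (β : Ordinal) :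
    leAux β = fun i α => α ≤ β ∧
      (match i with | false => Sig1Elem | true => Sig2Elem) (Rel1 β) (Rel2 β) α β := by
  unfold leAux
  rw [WellFounded.fix_eq]
  rfl

theorem le1_iff {α β : Ordinal} : le1 α β ↔ α ≤ β ∧ Sig1Elem (Rel1 β) (Rel2 β) α β := by
  show leAux β false α ↔ _
  rw [leAux_eq]

theorem le2_iff {α β : Ordinal} : le2 α β ↔ α ≤ β ∧ Sig2Elem (Rel1 β) (Rel2 β) α β := by
  show leAux β true α ↔ _
  rw [leAux_eq]

theorem Rel1_agree {β δ : Ordinal} (x y : Ordinal) (h1 : y < β) (h2 : y < δ) :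
    Rel1 β x y ↔ Rel1 δ x y :=
  ⟨fun ⟨_, h⟩ => ⟨h2, h⟩, fun ⟨_, h⟩ => ⟨h1, h⟩⟩

theorem Rel2_agree {β δ : Ordinal} (x y : Ordinal) (h1 : y < β) (h2 : y < δ) :
    Rel2 β x y ↔ Rel2 δ x y :=
  ⟨fun ⟨_, h⟩ => ⟨h2, h⟩, fun ⟨_, h⟩ => ⟨h1, h⟩⟩

/-- One more than the largest variable index occurring in a term. -/
def Trm.maxVar : Trm → ℕ
  | .evar n => n + 1
  | .avar n => n + 1
  | .cst _ => 0

/-- One more than the largest variable index occurring in a formula. -/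
def QF.maxVar : QF → ℕ
  | .le s t => max s.maxVar t.maxVar
  | .le1 s t => max s.maxVar t.maxVar
  | .le2 s t => max s.maxVar t.maxVar
  | .not φ => φ.maxVar
  | .and φ ψ => max φ.maxVar ψ.maxVar
  | .or φ ψ => max φ.maxVar ψ.maxVar

theorem Trm.val_congr {v v' w w' : ℕ → Ordinal} {N : ℕ}
    (hv : ∀ n < N, v n = v' n) (hw : ∀ n < N, w n = w' n) :
    ∀ t : Trm, t.maxVar ≤ N → t.val v w = t.val v' w'
  | .evar n, h => hv n h
  | .avar n, h => hw n h
  | .cst _, _ => rfl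

theorem QF.eval_congr {r1 r2 : Ordinal → Ordinal → Prop} {v v' w w' : ℕ → Ordinal} {N : ℕ}
    (hv : ∀ n < N, v n = v' n) (hw : ∀ n < N, w n = w' n)
    (φ : QF) (h : φ.maxVar ≤ N) :
    φ.eval r1 r2 v w ↔ φ.eval r1 r2 v' w' := by
  induction φ with
  | le s t =>
      simp only [QF.maxVar, max_le_iff] at h
      simp only [QF.eval, Trm.val_congr hv hw s h.1, Trm.val_congr hv hw t h.2]
  | le1 s t =>
      simp only [QF.maxVar, max_le_iff] at h
      simp only [QF.eval, Trm.val_congr hv hw s h.1, Trm.val_congr hv hw t h.2]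
  | le2 s t =>
      simp only [QF.maxVar, max_le_iff] at h
      simp only [QF.eval, Trm.val_congr hv hw s h.1, Trm.val_congr hv hw t h.2]
  | not φ ih =>
      simp only [QF.maxVar] at h
      simp only [QF.eval, ih h]
  | and φ ψ ih1 ih2 =>
      simp only [QF.maxVar, max_le_iff] at h
      simp only [QF.eval, ih1 h.1, ih2 h.2]
  | or φ ψ ih1 ih2 =>
      simp only [QF.maxVar, max_le_iff] at h
      simp only [QF.eval, ih1 h.1, ih2 h.2]

theorem Trm.val_lt {v w : ℕ → Ordinal} {δ : Ordinal}
    (hv : ∀ n, v n < δ) (hw : ∀ n, w n < δ) :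
    ∀ t : Trm, t.CstBelow δ → t.val v w < δ
  | .evar n, _ => hv n
  | .avar n, _ => hw n
  | .cst _, h => h

theorem QF.eval_rel_congr {r1 r2 r1' r2' : Ordinal → Ordinal → Prop} {δ : Ordinal}
    {v w : ℕ → Ordinal}
    (h1 : ∀ x y, y < δ → (r1 x y ↔ r1' x y)) (h2 : ∀ x y, y < δ → (r2 x y ↔ r2' x y))
    (hv : ∀ n, v n < δ) (hw : ∀ n, w n < δ)
    (φ : QF) (hφ : φ.CstBelow δ) :
    φ.eval r1 r2 v w ↔ φ.eval r1' r2' v w := by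
  induction φ with
  | le s t => simp only [QF.eval]
  | le1 s t => exact h1 _ _ (Trm.val_lt hv hw t hφ.2)
  | le2 s t => exact h2 _ _ (Trm.val_lt hv hw t hφ.2)
  | not φ ih => simp only [QF.eval, ih hφ]
  | and φ ψ ih1 ih2 => simp only [QF.eval, ih1 hφ.1, ih2 hφ.2]
  | or φ ψ ih1 ih2 => simp only [QF.eval, ih1 hφ.1, ih2 hφ.2]

theorem Trm.CstBelow.mono {δ δ' : Ordinal} (h : δ ≤ δ') :
    ∀ t : Trm, t.CstBelow δ → t.CstBelow δ'
  | .evar _, _ => trivial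
  | .avar _, _ => trivial
  | .cst _, hc => lt_of_lt_of_le hc h

theorem QF.CstBelow.mono {δ δ' : Ordinal} (h : δ ≤ δ') :
    ∀ φ : QF, φ.CstBelow δ → φ.CstBelow δ'
  | .le s t, hc => ⟨Trm.CstBelow.mono h s hc.1, Trm.CstBelow.mono h t hc.2⟩
  | .le1 s t, hc => ⟨Trm.CstBelow.mono h s hc.1, Trm.CstBelow.mono h t hc.2⟩
  | .le2 s t, hc => ⟨Trm.CstBelow.mono h s hc.1, Trm.CstBelow.mono h t hc.2⟩
  | .not φ, hc => QF.CstBelow.mono h φ hc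
  | .and φ ψ, hc => ⟨QF.CstBelow.mono h φ hc.1, QF.CstBelow.mono h ψ hc.2⟩
  | .or φ ψ, hc => ⟨QF.CstBelow.mono h φ hc.1, QF.CstBelow.mono h ψ hc.2⟩

/-- Substitution of constants for the existential variables. -/
def Trm.substE (v : ℕ → Ordinal) : Trm → Trm
  | .evar n => .cst (v n)
  | .avar n => .avar n
  | .cst c => .cst c

def QF.substE (v : ℕ → Ordinal) : QF → QF
  | .le s t => .le (s.substE v) (t.substE v)
  | .le1 s t => .le1 (s.substE v) (t.substE v)
  | .le2 s t => .le2 (s.substE v) (t.substE v)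
  | .not φ => .not (φ.substE v)
  | .and φ ψ => .and (φ.substE v) (ψ.substE v)
  | .or φ ψ => .or (φ.substE v) (ψ.substE v)

theorem Trm.val_substE (v v' w : ℕ → Ordinal) :
    ∀ t : Trm, (t.substE v).val v' w = t.val v w
  | .evar _ => rfl
  | .avar _ => rfl
  | .cst _ => rfl

theorem QF.eval_substE (r1 r2 : Ordinal → Ordinal → Prop) (v v' w : ℕ → Ordinal) (φ : QF) :
    (φ.substE v).eval r1 r2 v' w ↔ φ.eval r1 r2 v w := by
  induction φ with
  | le s t => simp only [QF.substE, QF.eval, Trm.val_substE]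
  | le1 s t => simp only [QF.substE, QF.eval, Trm.val_substE]
  | le2 s t => simp only [QF.substE, QF.eval, Trm.val_substE]
  | not φ ih => simp only [QF.substE, QF.eval, ih]
  | and φ ψ ih1 ih2 => simp only [QF.substE, QF.eval, ih1, ih2]
  | or φ ψ ih1 ih2 => simp only [QF.substE, QF.eval, ih1, ih2]

theorem Trm.cstBelow_substE {δ : Ordinal} {v : ℕ → Ordinal} (hv : ∀ n, v n < δ) :
    ∀ t : Trm, t.CstBelow δ → (t.substE v).CstBelow δ
  | .evar n, _ => hv n
  | .avar _, h => h
  | .cst _, h => h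

theorem QF.cstBelow_substE {δ : Ordinal} {v : ℕ → Ordinal} (hv : ∀ n, v n < δ) :
    ∀ φ : QF, φ.CstBelow δ → (φ.substE v).CstBelow δ
  | .le s t, hc => ⟨Trm.cstBelow_substE hv s hc.1, Trm.cstBelow_substE hv t hc.2⟩
  | .le1 s t, hc => ⟨Trm.cstBelow_substE hv s hc.1, Trm.cstBelow_substE hv t hc.2⟩
  | .le2 s t, hc => ⟨Trm.cstBelow_substE hv s hc.1, Trm.cstBelow_substE hv t hc.2⟩
  | .not φ, hc => QF.cstBelow_substE hv φ hc
  | .and φ ψ, hc => ⟨QF.cstBelow_substE hv φ hc.1, QF.cstBelow_substE hv ψ hc.2⟩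
  | .or φ ψ, hc => ⟨QF.cstBelow_substE hv φ hc.1, QF.cstBelow_substE hv ψ hc.2⟩

theorem exists_bound {δ : Ordinal} (v : ℕ → Ordinal) (hv : ∀ n, v n < δ) :
    ∀ N : ℕ, ∃ γ, γ < δ ∧ ∀ n < N, v n ≤ γ
  | 0 => ⟨0, lt_of_le_of_lt zero_le (hv 0),
          fun n h => absurd h (Nat.not_lt_zero n)⟩
  | N + 1 => by
      obtain ⟨γ, hγ, hb⟩ := exists_bound v hv N
      refine ⟨max γ (v N), max_lt hγ (hv N), fun n hn => ?_⟩
      rcases Nat.lt_succ_iff_lt_or_eq.mp hn with h | h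
      · exact le_trans (hb n h) (le_max_left _ _)
      · exact h ▸ le_max_right _ _

end R2

/-- In `R₂`, `≤ᵢ`-successorship is closed under suprema for `i = 1, 2`. -/
theorem leI_closed_under_sup (α : Ordinal) (S : Set Ordinal)
    (hS : S.Nonempty) (hbd : BddAbove S) :
    ((∀ β ∈ S, R2.le1 α β) → R2.le1 α (sSup S)) ∧
    ((∀ β ∈ S, R2.le2 α β) → R2.le2 α (sSup S)) := by
  classical
  by_cases hmem : sSup S ∈ S
  · exact ⟨fun h => h _ hmem, fun h => h _ hmem⟩
  set δ := sSup S with hδdef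
  have hlt : ∀ β ∈ S, β < δ := fun β hβ =>
    lt_of_le_of_ne (le_csSup hbd hβ) (fun h => hmem (h ▸ hβ))
  have hex : ∀ γ, γ < δ → ∃ β ∈ S, γ < β := fun γ hγ => exists_lt_of_lt_csSup hS hγ
  constructor
  · -- Σ₁ case
    intro h
    obtain ⟨β₀, hβ₀⟩ := hS
    have hαδ : α < δ := lt_of_le_of_lt (R2.le1_iff.mp (h β₀ hβ₀)).1 (hlt β₀ hβ₀)
    rw [R2.le1_iff]
    refine ⟨hαδ.le, fun φ hNA hCst => ⟨?_, ?_⟩⟩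
    · rintro ⟨v, hv, he⟩
      exact ⟨v, fun n => lt_trans (hv n) hαδ, he⟩
    · rintro ⟨v, hv, he⟩
      set N := φ.maxVar with hN
      set v' : ℕ → Ordinal := fun n => if n < N then v n else 0 with hv'def
      have hv'δ : ∀ n, v' n < δ := fun n => by
        by_cases hn : n < N
        · simpa only [hv'def, if_pos hn] using hv n
        · simpa only [hv'def, if_neg hn] using
            lt_of_le_of_lt zero_le hαδ
      have hvv' : ∀ n < N, v n = v' n := fun n hn => by
        simp only [hv'def, if_pos hn]
      have he' : φ.eval (R2.Rel1 δ) (R2.Rel2 δ) v' v' :=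
        (R2.QF.eval_congr hvv' hvv' φ le_rfl).mp he
      obtain ⟨γ, hγ, hb⟩ := R2.exists_bound v' hv'δ N
      obtain ⟨β, hβS, hγβ⟩ := hex (max α γ) (max_lt hαδ hγ)
      have hαβ : α ≤ β := le_of_lt (lt_of_le_of_lt (le_max_left α γ) hγβ)
      have hβδ : β ≤ δ := (hlt β hβS).le
      have hv'β : ∀ n, v' n < β := fun n => by
        by_cases hn : n < N
        · exact lt_of_le_of_lt (hb n hn) (lt_of_le_of_lt (le_max_right α γ) hγβ)
        · simpa only [hv'def, if_neg hn] using
            lt_of_le_of_lt zero_le (lt_of_le_of_lt (le_max_left α γ) hγβ)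
      have heβ : φ.eval (R2.Rel1 β) (R2.Rel2 β) v' v' :=
        (R2.QF.eval_rel_congr
          (fun x y hy => R2.Rel1_agree x y hy (lt_of_lt_of_le hy hβδ))
          (fun x y hy => R2.Rel2_agree x y hy (lt_of_lt_of_le hy hβδ))
          hv'β hv'β φ (R2.QF.CstBelow.mono hαβ φ hCst)).mpr he'
      obtain ⟨u, hu, heu⟩ :=
        ((R2.le1_iff.mp (h β hβS)).2 φ hNA hCst).mpr ⟨v', hv'β, heβ⟩
      refine ⟨u, hu, ?_⟩
      exact (R2.QF.eval_rel_congr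
        (fun x y hy => R2.Rel1_agree x y (lt_of_lt_of_le hy hαβ) (lt_trans hy hαδ))
        (fun x y hy => R2.Rel2_agree x y (lt_of_lt_of_le hy hαβ) (lt_trans hy hαδ))
        hu hu φ hCst).mp heu
  · -- Σ₂ case
    intro h
    obtain ⟨β₀, hβ₀⟩ := hS
    have hαδ : α < δ := lt_of_le_of_lt (R2.le2_iff.mp (h β₀ hβ₀)).1 (hlt β₀ hβ₀)
    rw [R2.le2_iff]
    refine ⟨hαδ.le, fun φ hCst => ⟨?_, ?_⟩⟩
    · -- forward: Sat2 at α → Sat2 at δ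
      rintro ⟨v, hv, hA⟩
      have hα0 : (0 : Ordinal) < α := lt_of_le_of_lt zero_le (hv 0)
      set N := φ.maxVar with hN
      set v' : ℕ → Ordinal := fun n => if n < N then v n else 0 with hv'def
      have hv'α : ∀ n, v' n < α := fun n => by
        by_cases hn : n < N
        · simpa only [hv'def, if_pos hn] using hv n
        · simpa only [hv'def, if_neg hn] using hα0
      have hvv' : ∀ n < N, v n = v' n := fun n hn => by
        simp only [hv'def, if_pos hn]
      refine ⟨v', fun n => lt_trans (hv'α n) hαδ, fun w hw => ?_⟩
      set w' : ℕ → Ordinal := fun n => if n < N then w n else 0 with hw'def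
      have hw'δ : ∀ n, w' n < δ := fun n => by
        by_cases hn : n < N
        · simpa only [hw'def, if_pos hn] using hw n
        · simpa only [hw'def, if_neg hn] using lt_trans hα0 hαδ
      have hww' : ∀ n < N, w n = w' n := fun n hn => by
        simp only [hw'def, if_pos hn]
      obtain ⟨γ, hγ, hb⟩ := R2.exists_bound w' hw'δ N
      obtain ⟨β, hβS, hγβ⟩ := hex (max α γ) (max_lt hαδ hγ)
      have hαβ : α ≤ β := le_of_lt (lt_of_le_of_lt (le_max_left α γ) hγβ)
      have hβδ : β ≤ δ := (hlt β hβS).le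
      have hw'β : ∀ n, w' n < β := fun n => by
        by_cases hn : n < N
        · exact lt_of_le_of_lt (hb n hn) (lt_of_le_of_lt (le_max_right α γ) hγβ)
        · simpa only [hw'def, if_neg hn] using lt_of_lt_of_le hα0 hαβ
      set φ' := φ.substE v' with hφ'def
      have hCst' : φ'.CstBelow α := R2.QF.cstBelow_substE hv'α φ hCst
      have hSat2α : R2.Sat2 (R2.Rel1 β) (R2.Rel2 β) α φ' := by
        refine ⟨fun _ => 0, fun _ => hα0, fun w'' hw'' => ?_⟩
        rw [hφ'def, R2.QF.eval_substE]
        have h1 : φ.eval (R2.Rel1 δ) (R2.Rel2 δ) v' w'' :=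
          (R2.QF.eval_congr hvv' (fun n _ => rfl) φ le_rfl).mp (hA w'' hw'')
        exact (R2.QF.eval_rel_congr
          (fun x y hy => R2.Rel1_agree x y (lt_trans hy hαδ) (lt_of_lt_of_le hy hαβ))
          (fun x y hy => R2.Rel2_agree x y (lt_trans hy hαδ) (lt_of_lt_of_le hy hαβ))
          hv'α hw'' φ hCst).mp h1
      obtain ⟨u, hu, hB⟩ := ((R2.le2_iff.mp (h β hβS)).2 φ' hCst').mp hSat2α
      have h2 : φ.eval (R2.Rel1 β) (R2.Rel2 β) v' w' := by
        have := hB w' hw'β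
        rwa [hφ'def, R2.QF.eval_substE] at this
      have h3 : φ.eval (R2.Rel1 δ) (R2.Rel2 δ) v' w' :=
        (R2.QF.eval_rel_congr
          (fun x y hy => R2.Rel1_agree x y hy (lt_of_lt_of_le hy hβδ))
          (fun x y hy => R2.Rel2_agree x y hy (lt_of_lt_of_le hy hβδ))
          (fun n => lt_of_lt_of_le (hv'α n) hαβ) hw'β φ
          (R2.QF.CstBelow.mono hαβ φ hCst)).mp h2
      exact (R2.QF.eval_congr (fun n _ => rfl) hww' φ le_rfl).mpr h3
    · -- backward: Sat2 at δ → Sat2 at α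
      rintro ⟨v, hv, hA⟩
      set N := φ.maxVar with hN
      set v' : ℕ → Ordinal := fun n => if n < N then v n else 0 with hv'def
      have hv'δ : ∀ n, v' n < δ := fun n => by
        by_cases hn : n < N
        · simpa only [hv'def, if_pos hn] using hv n
        · simpa only [hv'def, if_neg hn] using
            lt_of_le_of_lt zero_le hαδ
      have hvv' : ∀ n < N, v n = v' n := fun n hn => by
        simp only [hv'def, if_pos hn]
      obtain ⟨γ, hγ, hb⟩ := R2.exists_bound v' hv'δ N
      obtain ⟨β, hβS, hγβ⟩ := hex (max α γ) (max_lt hαδ hγ)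
      have hαβ : α ≤ β := le_of_lt (lt_of_le_of_lt (le_max_left α γ) hγβ)
      have hβδ : β ≤ δ := (hlt β hβS).le
      have hv'β : ∀ n, v' n < β := fun n => by
        by_cases hn : n < N
        · exact lt_of_le_of_lt (hb n hn) (lt_of_le_of_lt (le_max_right α γ) hγβ)
        · simpa only [hv'def, if_neg hn] using
            lt_of_le_of_lt zero_le (lt_of_le_of_lt (le_max_left α γ) hγβ)
      have hSatβ : R2.Sat2 (R2.Rel1 β) (R2.Rel2 β) β φ := by
        refine ⟨v', hv'β, fun w hwβ => ?_⟩
        have hwδ : ∀ n, w n < δ := fun n => lt_of_lt_of_le (hwβ n) hβδ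
        have h1 : φ.eval (R2.Rel1 δ) (R2.Rel2 δ) v' w :=
          (R2.QF.eval_congr hvv' (fun n _ => rfl) φ le_rfl).mp (hA w hwδ)
        exact (R2.QF.eval_rel_congr
          (fun x y hy => R2.Rel1_agree x y hy (lt_of_lt_of_le hy hβδ))
          (fun x y hy => R2.Rel2_agree x y hy (lt_of_lt_of_le hy hβδ))
          hv'β hwβ φ (R2.QF.CstBelow.mono hαβ φ hCst)).mpr h1
      obtain ⟨u, hu, hB⟩ := ((R2.le2_iff.mp (h β hβS)).2 φ hCst).mpr hSatβ
      refine ⟨u, hu, fun w hwα => ?_⟩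
      exact (R2.QF.eval_rel_congr
        (fun x y hy => R2.Rel1_agree x y (lt_of_lt_of_le hy hαβ) (lt_trans hy hαδ))
        (fun x y hy => R2.Rel2_agree x y (lt_of_lt_of_le hy hαβ) (lt_trans hy hαδ))
        hu hwα φ hCst).mp (hB w hwα)

end
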